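/- Let L ≥ 1, d ≥ 0, D = 2^d, n = L·D, and X ∈ ℝ^{L×D}. Let v be the spatial-first packing of X, i.e., v(j·L + i) = X(i,j) for i ∈ {0,…,L−1}, j ∈ {0,…,D−1}. Define the left rotate-and-sum iterates v_0 = v and v_i(p) = v_{i−1}(p) + v_{i−1}((p + 2^{i−1}·L) mod n) for 1 ≤ i ≤ d. Then for every j ∈ {0,…,D−1} and i ∈ {0,…,L−1}, v_d(j·L + i) = Σ_{j'=0}^{D−1} X(i,j'). Hence after the rotate-and-sum, every length-L block already contains the broadcast row sums of X, so when a summation operator is fused with a following scalar operator, the masking step and the separate broadcast step can both be omitted, reducing the rotation count from 2·log₂ D to log₂ D. -/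

import Mathlib

/-- For `D = 2^d`, `n = L·D`, and the spatial-first packing `v` of
`X ∈ ℝ^{L×D}` (i.e. `v(j·L + i) = X(i,j)`), the left rotate-and-sum iterates
`v_0 = v`, `v_i(p) = v_{i-1}(p) + v_{i-1}((p + 2^{i-1}·L) mod n)` satisfy
`v_d(j·L + i) = Σ_{j'<D} X(i,j')` for every `j < D` and `i < L`: every length-`L`
block of the final iterate contains the broadcast row sums of `X`. -/
theorem stmt_3 (L d D n : ℕ) (hL : 1 ≤ L) (hD : D = 2 ^ d) (hn : n = L * D)
    (X : ℕ → ℕ → ℝ) (v : ℕ → ℝ)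
    (hv : ∀ i < L, ∀ j < D, v (j * L + i) = X i j)
    (w : ℕ → ℕ → ℝ)
    (h0 : ∀ p, w 0 p = v p)
    (hstep : ∀ i, 1 ≤ i → i ≤ d → ∀ p,
      w i p = w (i - 1) p + w (i - 1) ((p + 2 ^ (i - 1) * L) % n)) :
    ∀ j < D, ∀ i < L, w d (j * L + i) = ∑ j' ∈ Finset.range D, X i j' := by
  have hDpos : 0 < D := hD ▸ Nat.two_pow_pos d
  have hnpos : 0 < n := by rw [hn]; exact Nat.mul_pos hL hDpos
  have key : ∀ k, k ≤ d → ∀ p, p < n →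
      w k p = ∑ t ∈ Finset.range (2 ^ k), v ((p + t * L) % n) := by
    intro k
    induction k with
    | zero =>
      intro _ p hp
      simp [h0, Nat.mod_eq_of_lt hp]
    | succ k ih =>
      intro hk p hp
      have hstep' := hstep (k + 1) (by omega) hk p
      simp only [Nat.add_sub_cancel] at hstep'
      have hq : (p + 2 ^ k * L) % n < n := Nat.mod_lt _ hnpos
      rw [hstep', ih (by omega) p hp, ih (by omega) _ hq]
      have hmod : ∀ t : ℕ, ((p + 2 ^ k * L) % n + t * L) % n = (p + (2 ^ k + t) * L) % n := by
        intro t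
        rw [Nat.mod_add_mod, Nat.add_mul, ← Nat.add_assoc]
      rw [pow_succ, mul_two, Finset.sum_range_add]
      congr 1
      exact Finset.sum_congr rfl fun t _ => by rw [hmod]
  intro j hj i hi
  have hlt : j * L + i < n := by
    rw [hn]
    calc j * L + i < (j + 1) * L := by nlinarith
    _ ≤ D * L := Nat.mul_le_mul_right L hj
    _ = L * D := mul_comm _ _
  rw [key d le_rfl _ hlt, ← hD]
  have hterm : ∀ t : ℕ, (j * L + i + t * L) % n = ((j + t) % D) * L + i := by
    intro t
    have : j * L + i + t * L = ((j + t) % D) * L + i + ((j + t) / D) * n := by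
      rw [hn]
      have := Nat.div_add_mod (j + t) D
      nlinarith [Nat.div_add_mod (j + t) D]
    rw [this, Nat.add_mul_mod_self_right, Nat.mod_eq_of_lt]
    rw [hn]
    have hm : (j + t) % D < D := Nat.mod_lt _ hDpos
    calc ((j + t) % D) * L + i < ((j + t) % D + 1) * L := by nlinarith
    _ ≤ D * L := Nat.mul_le_mul_right L hm
    _ = L * D := mul_comm _ _
  have hterm' : ∀ t ∈ Finset.range D, v ((j * L + i + t * L) % n) = X i ((j + t) % D) := by
    intro t _
    rw [hterm t]
    exact hv i hi _ (Nat.mod_lt _ hDpos)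
  rw [Finset.sum_congr rfl hterm']
  apply Finset.sum_nbij' (fun t => (j + t) % D) (fun s => (s + D - j) % D)
  · intro t ht
    exact Finset.mem_range.mpr (Nat.mod_lt _ hDpos)
  · intro s hs
    exact Finset.mem_range.mpr (Nat.mod_lt _ hDpos)
  · intro t ht
    simp only [Finset.mem_range] at ht
    have e1 : (j + t) % D + D - j = (j + t) % D + (D - j) := by omega
    rw [e1, Nat.mod_add_mod]
    have e2 : j + t + (D - j) = t + D := by omega
    rw [e2, Nat.add_mod_right, Nat.mod_eq_of_lt ht]
  · intro s hs
    simp only [Finset.mem_range] at hs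
    rw [Nat.add_mod_mod]
    have e : j + (s + D - j) = s + D := by omega
    rw [e, Nat.add_mod_right, Nat.mod_eq_of_lt hs]
  · intro t _
    rfl
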